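/- arXiv:1708.09558 — 11 statements merged into one kernel-verified Lean document; each statement's English description precedes it below -/
import Mathlib

section
/- Let X and Y be metric spaces and q, r ≥ 0 real numbers. A map f : X → Y satisfies f '' (c_q A) ⊆ c_r (f '' A) for every A ⊆ X (i.e. f is continuous as a map of closure spaces (X, c_q) → (Y, c_r)) if and only if f is (q,r)-continuous, i.e. for every x ∈ X and every ε > 0 there exists δ > 0 such that for all x' ∈ X, dist x x' < q + δ implies dist (f x) (f x') < r + ε. -/
open Set

/-- The closure operator `c_r` on a metric space: all points within distance `r` of `A`. -/
def cr {X : Type*} [MetricSpace X] (r : ℝ) (A : Set X) : Set X :=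
  {x | EMetric.infEdist x A ≤ ENNReal.ofReal r}

theorem continuous_iff_qr_continuous {X Y : Type*} [MetricSpace X] [MetricSpace Y]
    (q r : ℝ) (hq : 0 ≤ q) (hr : 0 ≤ r) (f : X → Y) :
    (∀ A : Set X, f '' cr q A ⊆ cr r (f '' A)) ↔
    (∀ x : X, ∀ ε > 0, ∃ δ > 0, ∀ x' : X,
      dist x x' < q + δ → dist (f x) (f x') < r + ε) := by
  constructor
  · intro h x ε hε
    by_contra hcon
    push_neg at hcon
    set A : Set X := {x' | r + ε ≤ dist (f x) (f x')} with hA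
    have hxA : x ∈ cr q A := by
      simp only [cr, Set.mem_setOf_eq]
      refine ENNReal.le_of_forall_pos_le_add fun δ hδ _ => ?_
      obtain ⟨x', hdx, hdfx⟩ := hcon (δ : ℝ) (by exact_mod_cast hδ)
      have hx'A : x' ∈ A := hdfx
      calc EMetric.infEdist x A ≤ edist x x' := EMetric.infEdist_le_edist_of_mem hx'A
        _ ≤ ENNReal.ofReal (q + δ) := by
            rw [edist_dist]; exact ENNReal.ofReal_le_ofReal hdx.le
        _ = ENNReal.ofReal q + ENNReal.ofReal δ :=
            ENNReal.ofReal_add hq δ.coe_nonneg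
        _ = ENNReal.ofReal q + δ := by rw [ENNReal.ofReal_coe_nnreal]
    have hfx := h A ⟨x, hxA, rfl⟩
    simp only [cr, Set.mem_setOf_eq] at hfx
    have hlt : EMetric.infEdist (f x) (f '' A) < ENNReal.ofReal (r + ε) :=
      lt_of_le_of_lt hfx (ENNReal.ofReal_lt_ofReal_iff (by linarith) |>.2 (by linarith))
    replace hlt := Metric.infEDist_lt_iff.1 hlt
    obtain ⟨y, ⟨a, haA, rfl⟩, hy⟩ := hlt
    rw [edist_dist, ENNReal.ofReal_lt_ofReal_iff (by linarith)] at hy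
    exact absurd hy (not_lt.2 haA)
  · intro h A
    rintro _ ⟨x, hx, rfl⟩
    simp only [cr, Set.mem_setOf_eq] at hx ⊢
    refine ENNReal.le_of_forall_pos_le_add fun ε hε _ => ?_
    obtain ⟨δ, hδ, hδ'⟩ := h x (ε : ℝ) (by exact_mod_cast hε)
    have hlt : EMetric.infEdist x A < ENNReal.ofReal (q + δ) :=
      lt_of_le_of_lt hx (ENNReal.ofReal_lt_ofReal_iff (by linarith) |>.2 (by linarith))
    replace hlt := Metric.infEDist_lt_iff.1 hlt
    obtain ⟨a, haA, ha⟩ := hlt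
    rw [edist_dist, ENNReal.ofReal_lt_ofReal_iff (by linarith)] at ha
    have hfa : dist (f x) (f a) < r + ε := hδ' a ha
    calc EMetric.infEdist (f x) (f '' A) ≤ edist (f x) (f a) :=
          EMetric.infEdist_le_edist_of_mem ⟨a, haA, rfl⟩
      _ ≤ ENNReal.ofReal (r + ε) := by
          rw [edist_dist]; exact ENNReal.ofReal_le_ofReal hfa.le
      _ = ENNReal.ofReal r + ENNReal.ofReal ε := ENNReal.ofReal_add hr ε.coe_nonneg
      _ = ENNReal.ofReal r + ε := by rw [ENNReal.ofReal_coe_nnreal]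
end

section
/- Let X, Y, Z be metric spaces and q, r, s, t ≥ 0 real numbers with r ≤ s. If f : X → Y is (q,r)-continuous and g : Y → Z is (s,t)-continuous, then g ∘ f : X → Z is (q,t)-continuous. -/
/-- `(q,r)`-continuity of a map between metric spaces. -/
def QRContinuous {X Y : Type*} [MetricSpace X] [MetricSpace Y] (q r : ℝ) (f : X → Y) : Prop :=
  ∀ x : X, ∀ ε > 0, ∃ δ > 0, ∀ x' : X, dist x x' < q + δ → dist (f x) (f x') < r + ε

theorem qr_continuous_comp {X Y Z : Type*} [MetricSpace X] [MetricSpace Y] [MetricSpace Z]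
    (q r s t : ℝ) (hq : 0 ≤ q) (hr : 0 ≤ r) (hs : 0 ≤ s) (ht : 0 ≤ t) (hrs : r ≤ s)
    (f : X → Y) (g : Y → Z)
    (hf : QRContinuous q r f) (hg : QRContinuous s t g) :
    QRContinuous q t (g ∘ f) := by
  intro x ε hε
  obtain ⟨δ₁, hδ₁, hg1⟩ := hg (f x) ε hε
  obtain ⟨δ, hδ, hf1⟩ := hf x (s - r + δ₁) (by linarith)
  exact ⟨δ, hδ, fun x' hx' => hg1 (f x') (by have := hf1 x' hx'; linarith)⟩
end

section
/- Let X be a compact topological space, let c be a Čech closure operator on a set Y, and let 𝒞 be an interior cover of (Y, c), i.e. for every y ∈ Y there exists V ∈ 𝒞 with y ∉ c (univ \ V). Suppose f : X → Y is continuous, i.e. f '' (closure A) ⊆ c (f '' A) for every A ⊆ X (closure denoting topological closure in X). Then there exists a finite open cover 𝒰 of X such that for every U ∈ 𝒰 there exists V ∈ 𝒞 with f '' U ⊆ V. -/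
open Set

/-- A Čech closure operator on a set `Y`. -/
def IsCechClosure {Y : Type*} (c : Set Y → Set Y) : Prop :=
  c ∅ = ∅ ∧ (∀ A : Set Y, A ⊆ c A) ∧ ∀ A B : Set Y, c (A ∪ B) = c A ∪ c B

theorem lebesgue_lemma {X Y : Type*} [TopologicalSpace X] [CompactSpace X]
    (c : Set Y → Set Y) (hc : IsCechClosure c)
    (𝒞 : Set (Set Y)) (hcov : ∀ y : Y, ∃ V ∈ 𝒞, y ∉ c (univ \ V))
    (f : X → Y) (hf : ∀ A : Set X, f '' closure A ⊆ c (f '' A)) :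
    ∃ 𝒰 : Finset (Set X),
      (∀ U ∈ 𝒰, IsOpen U) ∧
      (⋃ U ∈ 𝒰, U) = univ ∧
      ∀ U ∈ 𝒰, ∃ V ∈ 𝒞, f '' U ⊆ V := by
  obtain ⟨hempty, hsub, hunion⟩ := hc
  have hmono : ∀ {A B : Set Y}, A ⊆ B → c A ⊆ c B := by
    intro A B hAB
    have h : A ∪ B = B := union_eq_self_of_subset_left hAB
    calc c A ⊆ c A ∪ c B := subset_union_left
      _ = c (A ∪ B) := (hunion A B).symm
      _ = c B := by rw [h]
  choose V hV hVy using hcov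
  set U : X → Set X := fun x => (closure (f ⁻¹' (univ \ V (f x))))ᶜ with hU
  have hUopen : ∀ x, IsOpen (U x) := fun x => isClosed_closure.isOpen_compl
  have hmem : ∀ x, x ∈ U x := by
    intro x hx
    exact hVy (f x) (hmono (image_preimage_subset f _) (hf _ ⟨x, hx, rfl⟩))
  have hcover : (univ : Set X) ⊆ ⋃ x, U x := fun x _ => mem_iUnion.2 ⟨x, hmem x⟩
  classical
  obtain ⟨t, ht⟩ := isCompact_univ.elim_finite_subcover U hUopen hcover
  refine ⟨t.image U, ?_, ?_, ?_⟩
  · intro W hW; obtain ⟨x, -, rfl⟩ := Finset.mem_image.1 hW; exact hUopen x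
  · apply eq_univ_of_univ_subset
    intro x hx
    obtain ⟨i, hi, hxi⟩ := mem_iUnion₂.1 (ht hx)
    exact mem_iUnion₂.2 ⟨U i, Finset.mem_image_of_mem U hi, hxi⟩
  · intro W hW; obtain ⟨x, -, rfl⟩ := Finset.mem_image.1 hW
    refine ⟨V (f x), hV (f x), ?_⟩
    rintro y ⟨u, hu, rfl⟩
    by_contra hy
    exact hu (subset_closure (by simp [hy]))
end

section
/- Let n ≥ 1, let Q = Set.Icc (0 : Fin n → ℝ) 1 be the unit n-cube with its subspace topology, let c be a Čech closure operator on a set Y with interior cover 𝒞, and let f : Q → Y be continuous, i.e. f '' (closure A) ⊆ c (f '' A) for every A ⊆ Q. Then there exists a positive integer k such that for every index vector z : Fin n → Fin k there exists V ∈ 𝒞 with f x ∈ V for every x ∈ Q satisfying (z i : ℝ)/k ≤ x i ≤ ((z i : ℝ) + 1)/k for every i : Fin n; that is, f maps each closed subcube of side length 1/k of the decomposition into some member of 𝒞. -/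
open Set

theorem lebesgue_lemma_cubes {Y : Type*} (n : ℕ) (hn : 1 ≤ n)
    (c : Set Y → Set Y) (hc : IsCechClosure c)
    (𝒞 : Set (Set Y)) (hcov : ∀ y : Y, ∃ V ∈ 𝒞, y ∉ c (univ \ V))
    (f : (Set.Icc (0 : Fin n → ℝ) 1) → Y)
    (hf : ∀ A : Set (Set.Icc (0 : Fin n → ℝ) 1), f '' closure A ⊆ c (f '' A)) :
    ∃ k : ℕ, 0 < k ∧ ∀ z : Fin n → Fin k, ∃ V ∈ 𝒞,
      ∀ x : Set.Icc (0 : Fin n → ℝ) 1,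
        (∀ i : Fin n, (z i : ℝ) / k ≤ (x : Fin n → ℝ) i ∧
          (x : Fin n → ℝ) i ≤ ((z i : ℝ) + 1) / k) →
        f x ∈ V := by
  obtain ⟨h0, hsub, hunion⟩ := hc
  have hmono : ∀ A B : Set Y, A ⊆ B → c A ⊆ c B := by
    intro A B hAB
    have h : A ∪ B = B := union_eq_self_of_subset_left hAB
    calc c A ⊆ c A ∪ c B := subset_union_left
      _ = c (A ∪ B) := (hunion A B).symm
      _ = c B := by rw [h]
  have hQdef : True := trivial
  set W : ↥𝒞 → Set (Set.Icc (0 : Fin n → ℝ) 1) := fun V => (closure (f ⁻¹' (↑V : Set Y)ᶜ))ᶜ with hW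
  have hWopen : ∀ V, IsOpen (W V) := fun V => isClosed_closure.isOpen_compl
  have hWV : ∀ (V : ↥𝒞) (x : Set.Icc (0 : Fin n → ℝ) 1), x ∈ W V → f x ∈ (V : Set Y) := by
    intro V x hx
    by_contra h
    exact hx (subset_closure h)
  have hcover : (univ : Set (Set.Icc (0 : Fin n → ℝ) 1)) ⊆ ⋃ V, W V := by
    intro x _
    obtain ⟨V, hV𝒞, hV⟩ := hcov (f x)
    refine mem_iUnion.2 ⟨⟨V, hV𝒞⟩, ?_⟩
    intro hx
    apply hV
    have h1 : f x ∈ c (f '' (f ⁻¹' Vᶜ)) := hf (f ⁻¹' Vᶜ) (mem_image_of_mem f hx)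
    have h2 : f '' (f ⁻¹' Vᶜ) ⊆ univ \ V := by
      rintro y ⟨a, ha, rfl⟩
      exact ⟨trivial, ha⟩
    exact hmono _ _ h2 h1
  have hcompact : IsCompact (univ : Set (Set.Icc (0 : Fin n → ℝ) 1)) := by
    have : CompactSpace (Set.Icc (0 : Fin n → ℝ) 1) := isCompact_iff_compactSpace.1 isCompact_Icc
    exact isCompact_univ
  obtain ⟨δ, hδpos, hδ⟩ := lebesgue_number_lemma_of_metric hcompact hWopen hcover
  obtain ⟨k, hk⟩ := exists_nat_one_div_lt hδpos
  refine ⟨k + 1, Nat.succ_pos k, ?_⟩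
  intro z
  have hKpos : (0 : ℝ) < (k + 1 : ℕ) := by positivity
  have hp : (fun i => (z i : ℝ) / (k + 1 : ℕ)) ∈ Set.Icc (0 : Fin n → ℝ) 1 := by
    constructor
    · intro i
      exact div_nonneg (Nat.cast_nonneg _) hKpos.le
    · intro i
      have hle : (z i : ℝ) ≤ (k + 1 : ℕ) := by exact_mod_cast (z i).isLt.le
      have := div_le_one hKpos |>.2 hle
      simpa using this
  obtain ⟨V, hV⟩ := hδ ⟨_, hp⟩ trivial
  refine ⟨V, V.2, ?_⟩
  intro x hx
  apply hWV V
  apply hV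
  rw [Metric.mem_ball]
  have hdist : dist x (⟨_, hp⟩ : Set.Icc (0 : Fin n → ℝ) 1) ≤ 1 / (k + 1 : ℕ) := by
    rw [Subtype.dist_eq]
    rw [dist_pi_le_iff (by positivity)]
    intro i
    show dist ((x : Fin n → ℝ) i) ((z i : ℝ) / (k + 1 : ℕ)) ≤ 1 / (k + 1 : ℕ)
    rw [Real.dist_eq, abs_le]
    obtain ⟨h1, h2⟩ := hx i
    have h3 : ((z i : ℝ) + 1) / (k + 1 : ℕ) = (z i : ℝ) / (k + 1 : ℕ) + 1 / (k + 1 : ℕ) :=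
      add_div _ _ _
    rw [h3] at h2
    constructor
    · linarith
    · linarith
  refine lt_of_le_of_lt hdist ?_
  push_cast
  exact hk
end

section
/- Let c be a Čech closure operator on a set Y and let f, g : unitInterval → Y be continuous maps (i.e. f '' (closure A) ⊆ c (f '' A) and g '' (closure A) ⊆ c (g '' A) for every A ⊆ unitInterval, closure taken in the standard topology of the unit interval) with f 1 = g 0. Then the concatenation f ⋆ g : unitInterval → Y, defined by (f ⋆ g) t = f (2t) for t ≤ 1/2 and (f ⋆ g) t = g (2t − 1) for t > 1/2, is continuous: (f ⋆ g) '' (closure A) ⊆ c ((f ⋆ g) '' A) for every A ⊆ unitInterval. -/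
open Set unitInterval

/-- The concatenation `f ⋆ g` of two paths in a closure space. -/
noncomputable def pathConcat {Y : Type*} (f g : unitInterval → Y) : unitInterval → Y :=
  fun t =>
    if h : (t : ℝ) ≤ 1 / 2 then
      f ⟨2 * (t : ℝ), by constructor <;> [linarith [t.2.1]; linarith]⟩
    else
      g ⟨2 * (t : ℝ) - 1, by constructor <;> [linarith [not_le.mp h]; linarith [t.2.2]]⟩

/-- first-half reparametrization -/
noncomputable def phiAux : unitInterval → unitInterval :=
  fun t => ⟨min (2 * (t : ℝ)) 1, le_min (by nlinarith [t.2.1]) one_pos.le, min_le_right _ _⟩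

/-- second-half reparametrization -/
noncomputable def psiAux : unitInterval → unitInterval :=
  fun t => ⟨max (2 * (t : ℝ) - 1) 0, le_max_right _ _,
    max_le (by linarith [t.2.2]) one_pos.le⟩

lemma phiAux_continuous : Continuous phiAux := by
  apply Continuous.subtype_mk
  exact ((continuous_const.mul continuous_subtype_val).min continuous_const)

lemma psiAux_continuous : Continuous psiAux := by
  apply Continuous.subtype_mk
  exact (((continuous_const.mul continuous_subtype_val).sub continuous_const).max
    continuous_const)

lemma comp_cont {Y : Type*} (c : Set Y → Set Y)
    (f : unitInterval → Y) (φ : unitInterval → unitInterval) (hφ : Continuous φ)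
    (hf : ∀ A : Set unitInterval, f '' closure A ⊆ c (f '' A)) :
    ∀ A : Set unitInterval, (f ∘ φ) '' closure A ⊆ c ((f ∘ φ) '' A) := by
  intro A
  rw [image_comp, image_comp]
  calc f '' (φ '' closure A) ⊆ f '' closure (φ '' A) :=
        image_mono (image_closure_subset_closure_image hφ)
    _ ⊆ c (f '' (φ '' A)) := hf _

theorem pathConcat_continuous {Y : Type*} (c : Set Y → Set Y) (hc : IsCechClosure c)
    (f g : unitInterval → Y)
    (hf : ∀ A : Set unitInterval, f '' closure A ⊆ c (f '' A))
    (hg : ∀ A : Set unitInterval, g '' closure A ⊆ c (g '' A))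
    (hfg : f 1 = g 0) :
    ∀ A : Set unitInterval, (pathConcat f g) '' closure A ⊆ c ((pathConcat f g) '' A) := by
  obtain ⟨-, -, hadd⟩ := hc
  have hmono : ∀ {S T : Set Y}, S ⊆ T → c S ⊆ c T := by
    intro S T hST
    have : c T = c S ∪ c T := by rw [← hadd, union_eq_right.mpr hST]
    rw [this]; exact subset_union_left
  set P := pathConcat f g with hP
  -- P agrees with f ∘ phiAux on the left half, g ∘ psiAux on the right half
  have hPf : ∀ t : unitInterval, (t : ℝ) ≤ 1 / 2 → P t = (f ∘ phiAux) t := by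
    intro t ht
    have e : phiAux t = ⟨2 * (t : ℝ), by nlinarith [t.2.1], by linarith⟩ :=
      Subtype.ext (min_eq_left (by linarith))
    simp only [hP, pathConcat, dif_pos ht, Function.comp_apply, e]
  have hPg : ∀ t : unitInterval, 1 / 2 ≤ (t : ℝ) → P t = (g ∘ psiAux) t := by
    intro t ht
    by_cases h : (t : ℝ) ≤ 1 / 2
    · have ht2 : (t : ℝ) = 1 / 2 := le_antisymm h ht
      simp only [hP, pathConcat, dif_pos h, Function.comp_apply, psiAux]
      have h1 : (⟨2 * (t : ℝ), by nlinarith [t.2.1], by linarith⟩ : unitInterval) = 1 := by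
        ext; simp [ht2]
      have h2 : (⟨max (2 * (t : ℝ) - 1) 0, le_max_right _ _, max_le (by linarith [t.2.2]) one_pos.le⟩ : unitInterval) = 0 := by
        ext; simp [ht2]
      rw [h1, h2, hfg]
    · have e : psiAux t = ⟨2 * (t : ℝ) - 1, by linarith [not_le.mp h], by linarith [t.2.2]⟩ :=
        Subtype.ext (max_eq_left (by linarith [not_le.mp h]))
      simp only [hP, pathConcat, dif_neg h, Function.comp_apply, e]
  intro A
  set A1 : Set unitInterval := A ∩ {t | (t : ℝ) ≤ 1 / 2} with hA1
  set A2 : Set unitInterval := A ∩ {t | 1 / 2 ≤ (t : ℝ)} with hA2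
  have hAeq : A = A1 ∪ A2 := by
    ext t; constructor
    · intro ht
      rcases le_total (t : ℝ) (1 / 2) with h | h
      · exact Or.inl ⟨ht, h⟩
      · exact Or.inr ⟨ht, h⟩
    · rintro (⟨ht, -⟩ | ⟨ht, -⟩) <;> exact ht
  have hcl1 : closure A1 ⊆ {t : unitInterval | (t : ℝ) ≤ 1 / 2} :=
    closure_minimal inter_subset_right
      (isClosed_le continuous_subtype_val continuous_const)
  have hcl2 : closure A2 ⊆ {t : unitInterval | 1 / 2 ≤ (t : ℝ)} :=
    closure_minimal inter_subset_right
      (isClosed_le continuous_const continuous_subtype_val)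
  rintro y ⟨t, htcl, rfl⟩
  rw [hAeq, closure_union] at htcl
  have himA : P '' A1 ⊆ P '' A ∧ P '' A2 ⊆ P '' A :=
    ⟨image_mono (by rw [hAeq]; exact subset_union_left),
     image_mono (by rw [hAeq]; exact subset_union_right)⟩
  rcases htcl with h1 | h2
  · have : P t = (f ∘ phiAux) t := hPf t (hcl1 h1)
    rw [this]
    have hmem : (f ∘ phiAux) t ∈ c ((f ∘ phiAux) '' A1) :=
      comp_cont c f phiAux phiAux_continuous hf A1 ⟨t, h1, rfl⟩
    refine hmono ?_ hmem
    rintro y ⟨s, hs, rfl⟩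
    exact himA.1 ⟨s, hs, hPf s hs.2⟩
  · have : P t = (g ∘ psiAux) t := hPg t (hcl2 h2)
    rw [this]
    have hmem : (g ∘ psiAux) t ∈ c ((g ∘ psiAux) '' A2) :=
      comp_cont c g psiAux psiAux_continuous hg A2 ⟨t, h2, rfl⟩
    refine hmono ?_ hmem
    rintro y ⟨s, hs, rfl⟩
    exact himA.2 ⟨s, hs, hPg s hs.2⟩
end

section
/- Let c be a Čech closure operator on a set Y and let f : unitInterval → Y be a continuous path (f '' (closure A) ⊆ c (f '' A) for every A ⊆ unitInterval). Let e : unitInterval → Y be the constant path e t = f 0. Then e ⋆ f is homotopic to f rel ∂I: there exists a map H : unitInterval × unitInterval → Y, continuous from the product topology (H '' (closure A) ⊆ c (H '' A) for every A ⊆ unitInterval × unitInterval), such that H (s, 0) = (e ⋆ f) s and H (s, 1) = f s for all s, and H (0, t) = f 0 and H (1, t) = f 1 for all t. -/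
open Set unitInterval

/-- Reparametrization map for the homotopy. -/
noncomputable def phiMap : unitInterval × unitInterval → unitInterval :=
  fun p => ⟨max 0 ((2 * (p.1 : ℝ) - 1 + (p.2 : ℝ)) / (1 + (p.2 : ℝ))), by
    have ht0 : (0:ℝ) ≤ p.2 := p.2.2.1
    have hpos : (0:ℝ) < 1 + (p.2 : ℝ) := by linarith
    constructor
    · exact le_max_left _ _
    · apply max_le (by linarith)
      rw [div_le_one hpos]
      linarith [p.1.2.2]⟩

lemma phiMap_cont : Continuous phiMap := by
  apply Continuous.subtype_mk
  apply Continuous.max continuous_const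
  apply Continuous.div
  · fun_prop
  · fun_prop
  · intro p
    have ht0 : (0:ℝ) ≤ p.2 := p.2.2.1
    intro h; linarith [h]

theorem const_concat_homotopic {Y : Type*} (c : Set Y → Set Y) (hc : IsCechClosure c)
    (f : unitInterval → Y)
    (hf : ∀ A : Set unitInterval, f '' closure A ⊆ c (f '' A)) :
    ∃ H : unitInterval × unitInterval → Y,
      (∀ A : Set (unitInterval × unitInterval), H '' closure A ⊆ c (H '' A)) ∧
      (∀ s : unitInterval, H (s, 0) = pathConcat (fun _ => f 0) f s) ∧
      (∀ s : unitInterval, H (s, 1) = f s) ∧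
      (∀ t : unitInterval, H (0, t) = f 0) ∧
      (∀ t : unitInterval, H (1, t) = f 1) := by
  refine ⟨f ∘ phiMap, ?_, ?_, ?_, ?_, ?_⟩
  · intro A
    calc (f ∘ phiMap) '' closure A = f '' (phiMap '' closure A) := image_comp f phiMap _
      _ ⊆ f '' closure (phiMap '' A) :=
        image_mono (f := f) (image_closure_subset_closure_image phiMap_cont)
      _ ⊆ c (f '' (phiMap '' A)) := hf _
      _ = c ((f ∘ phiMap) '' A) := by rw [image_comp]
  · intro s
    simp only [Function.comp_apply, pathConcat, phiMap]
    by_cases h : (s : ℝ) ≤ 1 / 2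
    · rw [dif_pos h]
      congr 1
      ext
      simp only [Icc.coe_zero]
      rw [max_eq_left (by apply div_nonpos_of_nonpos_of_nonneg <;> linarith)]
    · rw [dif_neg h]
      have := not_le.mp h
      congr 1
      ext
      simp only [Icc.coe_zero]
      rw [max_eq_right (by apply div_nonneg <;> linarith)]
      ring
  · intro t
    simp only [Function.comp_apply, phiMap]
    congr 1
    ext
    have ht0 : (0:ℝ) ≤ t.1 := t.2.1
    simp only [Icc.coe_one]
    rw [max_eq_right (by apply div_nonneg <;> linarith)]
    rw [div_eq_iff (by norm_num : (1:ℝ)+1 ≠ 0)]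
    ring
  · intro t
    simp only [Function.comp_apply, phiMap]
    congr 1
    ext
    have ht1 : (t:ℝ) ≤ 1 := t.2.2
    have ht0 : (0:ℝ) ≤ t.1 := t.2.1
    simp only [Icc.coe_zero]
    rw [max_eq_left (by apply div_nonpos_of_nonpos_of_nonneg <;> linarith)]
  · intro t
    simp only [Function.comp_apply, phiMap]
    congr 1
    ext
    have ht0 : (0:ℝ) ≤ t.1 := t.2.1
    have hpos : (0:ℝ) < 1 + (t : ℝ) := by linarith
    simp only [Icc.coe_one]
    rw [max_eq_right (by positivity)]
    rw [div_eq_iff hpos.ne']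
    ring
end

section
/- Let c be a Čech closure operator on a set Y and let f : unitInterval → Y be a continuous path (f '' (closure A) ⊆ c (f '' A) for every A ⊆ unitInterval). Let g : unitInterval → Y be the reverse path g t = f (1 − t). Then f ⋆ g is null-homotopic rel ∂I: there exists a map H : unitInterval × unitInterval → Y, continuous from the product topology (H '' (closure A) ⊆ c (H '' A) for every A ⊆ unitInterval × unitInterval), such that H (s, 0) = (f ⋆ g) s for all s, H (s, 1) = f 0 for all s, and H (0, t) = f 0 and H (1, t) = f 0 for all t. -/
open Set unitInterval

/-- The reparametrization map for the null homotopy. -/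
noncomputable def nullPhi : unitInterval × unitInterval → unitInterval :=
  fun p => ⟨(1 - (p.2 : ℝ)) * min (2 * (p.1 : ℝ)) (2 - 2 * (p.1 : ℝ)), by
    have h1 := p.1.2.1; have h2 := p.1.2.2
    have h3 := p.2.2.1; have h4 := p.2.2.2
    constructor
    · apply mul_nonneg (by linarith)
      exact le_min (by linarith) (by linarith)
    · calc (1 - (p.2 : ℝ)) * min (2 * (p.1 : ℝ)) (2 - 2 * (p.1 : ℝ)) ≤
          1 * 1 := by
            apply mul_le_mul (by linarith) ?_ ?_ (by norm_num)
            · rcases le_total ((p.1 : ℝ)) (1/2) with h | h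
              · exact (min_le_left _ _).trans (by linarith)
              · exact (min_le_right _ _).trans (by linarith)
            · exact le_min (by linarith) (by linarith)
        _ = 1 := by ring⟩

lemma nullPhi_continuous : Continuous nullPhi := by
  apply Continuous.subtype_mk
  fun_prop

theorem concat_reverse_nullhomotopic {Y : Type*} (c : Set Y → Set Y) (hc : IsCechClosure c)
    (f : unitInterval → Y)
    (hf : ∀ A : Set unitInterval, f '' closure A ⊆ c (f '' A)) :
    ∃ H : unitInterval × unitInterval → Y,
      (∀ A : Set (unitInterval × unitInterval), H '' closure A ⊆ c (H '' A)) ∧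
      (∀ s : unitInterval, H (s, 0) = pathConcat f (fun t => f (unitInterval.symm t)) s) ∧
      (∀ s : unitInterval, H (s, 1) = f 0) ∧
      (∀ t : unitInterval, H (0, t) = f 0) ∧
      (∀ t : unitInterval, H (1, t) = f 0) := by
  refine ⟨f ∘ nullPhi, ?_, ?_, ?_, ?_, ?_⟩
  · intro A
    calc (f ∘ nullPhi) '' closure A = f '' (nullPhi '' closure A) := by
          rw [image_comp]
      _ ⊆ f '' closure (nullPhi '' A) :=
          image_mono (image_closure_subset_closure_image nullPhi_continuous)
      _ ⊆ c (f '' (nullPhi '' A)) := hf _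
      _ = c ((f ∘ nullPhi) '' A) := by rw [image_comp]
  · intro s
    have h1 := s.2.1; have h2 := s.2.2
    simp only [Function.comp_apply, pathConcat]
    split_ifs with h
    · congr 1
      ext
      simp only [nullPhi, Icc.coe_zero]
      rw [min_eq_left (by linarith)]
      ring
    · congr 1
      ext
      simp only [nullPhi, Icc.coe_zero, coe_symm_eq]
      push_neg at h
      rw [min_eq_right (by linarith)]
      ring
  · intro s
    simp only [Function.comp_apply]
    congr 1
    ext
    simp [nullPhi]
  · intro t
    simp only [Function.comp_apply]
    congr 1
    ext
    simp [nullPhi]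
  · intro t
    simp only [Function.comp_apply]
    congr 1
    ext
    simp [nullPhi]
end

section
/- Let c be a Čech closure operator on a set Y and let f, g, h : unitInterval → Y be continuous paths (each path p satisfies p '' (closure A) ⊆ c (p '' A) for every A ⊆ unitInterval) with f 1 = g 0 and g 1 = h 0. Then (f ⋆ g) ⋆ h is homotopic rel ∂I to f ⋆ (g ⋆ h): there exists H : unitInterval × unitInterval → Y, continuous from the product topology (H '' (closure A) ⊆ c (H '' A) for every A ⊆ unitInterval × unitInterval), such that H (s, 0) = ((f ⋆ g) ⋆ h) s and H (s, 1) = (f ⋆ (g ⋆ h)) s for all s, and H (0, t) = f 0 and H (1, t) = h 1 for all t. -/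
open Set unitInterval

lemma cech_mono {Y : Type*} {c : Set Y → Set Y} (hc : IsCechClosure c) {S T : Set Y}
    (h : S ⊆ T) : c S ⊆ c T := by
  have : c T = c S ∪ c T := by rw [← hc.2.2, union_eq_right.mpr h]
  rw [this]; exact subset_union_left

lemma comp_cech {Y : Type*} {c : Set Y → Set Y} {X : Type*} [TopologicalSpace X]
    {Q : unitInterval → Y} (hQ : ∀ A, Q '' closure A ⊆ c (Q '' A))
    {φ : X → unitInterval} (hφ : Continuous φ) :
    ∀ A : Set X, (Q ∘ φ) '' closure A ⊆ c ((Q ∘ φ) '' A) := by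
  intro A
  rw [image_comp]
  calc Q '' (φ '' closure A) ⊆ Q '' closure (φ '' A) :=
        image_mono (image_closure_subset_closure_image hφ)
    _ ⊆ c (Q '' (φ '' A)) := hQ _
    _ = c ((Q ∘ φ) '' A) := by rw [image_comp]

lemma concat_cech {Y : Type*} {c : Set Y → Set Y} (hc : IsCechClosure c)
    {f g : unitInterval → Y}
    (hf : ∀ A, f '' closure A ⊆ c (f '' A)) (hg : ∀ A, g '' closure A ⊆ c (g '' A))
    (hfg : f 1 = g 0) :
    ∀ A, pathConcat f g '' closure A ⊆ c (pathConcat f g '' A) := by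
  intro A
  set α : unitInterval → unitInterval := fun t =>
    ⟨min (2 * (t : ℝ)) 1, le_min (by nlinarith [t.2.1]) zero_le_one, min_le_right _ _⟩ with hα
  set β : unitInterval → unitInterval := fun t =>
    ⟨max (2 * (t : ℝ) - 1) 0, le_max_right _ _, max_le (by nlinarith [t.2.2]) zero_le_one⟩
    with hβ
  have hαc : Continuous α := by
    apply Continuous.subtype_mk
    exact (continuous_const.mul continuous_subtype_val).min continuous_const
  have hβc : Continuous β := by
    apply Continuous.subtype_mk
    exact ((continuous_const.mul continuous_subtype_val).sub continuous_const).max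
      continuous_const
  have heq1 : ∀ t : unitInterval, (t : ℝ) ≤ 1 / 2 → pathConcat f g t = f (α t) := by
    intro t ht
    simp only [pathConcat, dif_pos ht]
    exact congrArg f (Subtype.ext
      (show (2 * (t : ℝ) : ℝ) = min (2 * (t : ℝ)) 1 from (min_eq_left (by linarith)).symm))
  have heq2 : ∀ t : unitInterval, 1 / 2 ≤ (t : ℝ) → pathConcat f g t = g (β t) := by
    intro t ht
    by_cases h12 : (t : ℝ) ≤ 1 / 2
    · have ht2 : (t : ℝ) = 1 / 2 := le_antisymm h12 ht
      simp only [pathConcat, dif_pos h12]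
      have key : ∀ p : (2 * (t : ℝ)) ∈ Icc (0:ℝ) 1, f ⟨2 * (t : ℝ), p⟩ = g (β t) := by
        intro p
        have e1 : (⟨2 * (t : ℝ), p⟩ : unitInterval) = 1 :=
          Subtype.ext (show 2 * (t : ℝ) = ((1 : unitInterval) : ℝ) by simp [ht2])
        rw [e1, hfg]
        exact congrArg g (Subtype.ext
          (show ((0 : unitInterval) : ℝ) = max (2 * (t : ℝ) - 1) 0 by simp [ht2]))
      exact key _
    · simp only [pathConcat, dif_neg h12]
      exact congrArg g (Subtype.ext
        (show (2 * (t : ℝ) - 1 : ℝ) = max (2 * (t : ℝ) - 1) 0 from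
          (max_eq_left (by push_neg at h12; linarith)).symm))
  set A₁ := A ∩ {t : unitInterval | (t : ℝ) ≤ 1 / 2} with hA₁
  set A₂ := A ∩ {t : unitInterval | ¬ (t : ℝ) ≤ 1 / 2} with hA₂
  have hAu : A = A₁ ∪ A₂ := by
    rw [hA₁, hA₂, ← inter_union_distrib_left, ← compl_setOf, union_compl_self, inter_univ]
  have hc1 : closure A₁ ⊆ {t : unitInterval | (t : ℝ) ≤ 1 / 2} :=
    closure_minimal inter_subset_right (isClosed_le continuous_subtype_val continuous_const)
  have hc2 : closure A₂ ⊆ {t : unitInterval | 1 / 2 ≤ (t : ℝ)} := by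
    apply closure_minimal _ (isClosed_le continuous_const continuous_subtype_val)
    exact fun x hx => le_of_lt (not_le.mp hx.2)
  have key1 : pathConcat f g '' closure A₁ ⊆ c (pathConcat f g '' A) := by
    have e1 : pathConcat f g '' closure A₁ = (f ∘ α) '' closure A₁ :=
      image_congr fun x hx => heq1 x (hc1 hx)
    have e2 : pathConcat f g '' A₁ = (f ∘ α) '' A₁ :=
      image_congr fun x hx => heq1 x hx.2
    rw [e1]
    calc (f ∘ α) '' closure A₁ ⊆ c ((f ∘ α) '' A₁) := comp_cech hf hαc A₁
      _ = c (pathConcat f g '' A₁) := by rw [e2]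
      _ ⊆ c (pathConcat f g '' A) := cech_mono hc (image_mono inter_subset_left)
  have key2 : pathConcat f g '' closure A₂ ⊆ c (pathConcat f g '' A) := by
    have e1 : pathConcat f g '' closure A₂ = (g ∘ β) '' closure A₂ :=
      image_congr fun x hx => heq2 x (hc2 hx)
    have e2 : pathConcat f g '' A₂ = (g ∘ β) '' A₂ :=
      image_congr fun x hx => heq2 x (le_of_lt (not_le.mp hx.2))
    rw [e1]
    calc (g ∘ β) '' closure A₂ ⊆ c ((g ∘ β) '' A₂) := comp_cech hg hβc A₂
      _ = c (pathConcat f g '' A₂) := by rw [e2]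
      _ ⊆ c (pathConcat f g '' A) := cech_mono hc (image_mono inter_subset_left)
  calc pathConcat f g '' closure A = pathConcat f g '' (closure A₁ ∪ closure A₂) := by
        rw [hAu, closure_union]
    _ = pathConcat f g '' closure A₁ ∪ pathConcat f g '' closure A₂ := image_union _ _ _
    _ ⊆ c (pathConcat f g '' A) := union_subset key1 key2

noncomputable def rhoFn : ℝ → ℝ := fun s => max (s / 2) (max (s - 1/4) (2 * s - 1))

lemma rhoFn_mem {x : ℝ} (hx : x ∈ Icc (0:ℝ) 1) : rhoFn x ∈ Icc (0:ℝ) 1 := by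
  obtain ⟨h0, h1⟩ := hx
  constructor
  · exact le_trans (by linarith) (le_max_left _ _)
  · exact max_le (by linarith) (max_le (by linarith) (by linarith))

noncomputable def phiFn : unitInterval × unitInterval → unitInterval := fun p =>
  ⟨(1 - (p.2 : ℝ)) * (p.1 : ℝ) + (p.2 : ℝ) * rhoFn (p.1 : ℝ), by
    obtain ⟨hs0, hs1⟩ := p.1.2
    obtain ⟨ht0, ht1⟩ := p.2.2
    obtain ⟨hr0, hr1⟩ := rhoFn_mem p.1.2
    constructor <;> nlinarith⟩

lemma phiFn_coe (p : unitInterval × unitInterval) :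
    ((phiFn p : unitInterval) : ℝ) = (1 - (p.2 : ℝ)) * (p.1 : ℝ) + (p.2 : ℝ) * rhoFn (p.1 : ℝ) :=
  rfl

lemma phiFn_cont : Continuous phiFn := by
  have hrhoc : Continuous rhoFn := by
    unfold rhoFn
    exact (continuous_id.div_const 2).max
      ((continuous_id.sub continuous_const).max
        ((continuous_const.mul continuous_id).sub continuous_const))
  apply Continuous.subtype_mk
  have h1 : Continuous fun p : unitInterval × unitInterval => (p.1 : ℝ) :=
    continuous_subtype_val.comp continuous_fst
  have h2 : Continuous fun p : unitInterval × unitInterval => (p.2 : ℝ) :=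
    continuous_subtype_val.comp continuous_snd
  exact ((continuous_const.sub h2).mul h1).add (h2.mul (hrhoc.comp h1))

theorem concat_assoc_homotopic {Y : Type*} (c : Set Y → Set Y) (hc : IsCechClosure c)
    (f g h : unitInterval → Y)
    (hf : ∀ A : Set unitInterval, f '' closure A ⊆ c (f '' A))
    (hg : ∀ A : Set unitInterval, g '' closure A ⊆ c (g '' A))
    (hh : ∀ A : Set unitInterval, h '' closure A ⊆ c (h '' A))
    (hfg : f 1 = g 0) (hgh : g 1 = h 0) :
    ∃ H : unitInterval × unitInterval → Y,
      (∀ A : Set (unitInterval × unitInterval), H '' closure A ⊆ c (H '' A)) ∧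
      (∀ s : unitInterval, H (s, 0) = pathConcat (pathConcat f g) h s) ∧
      (∀ s : unitInterval, H (s, 1) = pathConcat f (pathConcat g h) s) ∧
      (∀ t : unitInterval, H (0, t) = f 0) ∧
      (∀ t : unitInterval, H (1, t) = h 1) := by
  have hpc1 : pathConcat f g 1 = h 0 := by
    simp only [pathConcat]
    rw [dif_neg (show ¬ ((1 : unitInterval) : ℝ) ≤ 1/2 by norm_num)]
    rw [← hgh]
    exact congrArg g (Subtype.ext (by norm_num))
  have hQ : ∀ A, pathConcat (pathConcat f g) h '' closure A ⊆
      c (pathConcat (pathConcat f g) h '' A) :=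
    concat_cech hc (concat_cech hc hf hg hfg) hh hpc1
  refine ⟨pathConcat (pathConcat f g) h ∘ phiFn, comp_cech hQ phiFn_cont, ?_, ?_, ?_, ?_⟩
  · intro s
    have hp : phiFn (s, 0) = s := Subtype.ext (by rw [phiFn_coe]; simp)
    show pathConcat (pathConcat f g) h (phiFn (s, 0)) = _
    rw [hp]
  · intro s
    show pathConcat (pathConcat f g) h (phiFn (s, 1)) = pathConcat f (pathConcat g h) s
    rcases le_or_gt (s : ℝ) (1/2) with hs | hs
    · have hr : rhoFn (s : ℝ) = (s : ℝ) / 2 := by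
        have hi : max ((s : ℝ) - 1/4) (2 * (s : ℝ) - 1) = (s : ℝ) - 1/4 :=
          max_eq_left (by linarith)
        unfold rhoFn
        rw [hi]
        exact max_eq_left (by linarith)
      have hp : phiFn (s, 1) = ⟨(s : ℝ)/2, ⟨by linarith [s.2.1], by linarith [s.2.2]⟩⟩ :=
        Subtype.ext (by rw [phiFn_coe]; simp [hr])
      rw [hp]
      simp only [pathConcat]
      rw [dif_pos (show ((s:ℝ)/2 : ℝ) ≤ 1/2 by linarith [s.2.2]),
        dif_pos (show (2*((s:ℝ)/2) : ℝ) ≤ 1/2 by linarith), dif_pos hs]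
      exact congrArg f (Subtype.ext (show 2*(2*((s:ℝ)/2)) = 2*(s:ℝ) by ring))
    · rcases le_or_gt (s : ℝ) (3/4) with hs3 | hs3
      · have hr : rhoFn (s : ℝ) = (s : ℝ) - 1/4 := by
          have hi : max ((s : ℝ) - 1/4) (2 * (s : ℝ) - 1) = (s : ℝ) - 1/4 :=
            max_eq_left (by linarith)
          unfold rhoFn
          rw [hi]
          exact max_eq_right (by linarith)
        have hp : phiFn (s, 1) = ⟨(s : ℝ) - 1/4, ⟨by linarith, by linarith [s.2.2]⟩⟩ :=
          Subtype.ext (by rw [phiFn_coe]; simp [hr])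
        rw [hp]
        simp only [pathConcat]
        rw [dif_pos (show ((s:ℝ) - 1/4 : ℝ) ≤ 1/2 by linarith),
          dif_neg (show ¬ (2*((s:ℝ) - 1/4) : ℝ) ≤ 1/2 by push_neg; linarith),
          dif_neg (show ¬ ((s:ℝ) : ℝ) ≤ 1/2 by push_neg; linarith),
          dif_pos (show (2*(s:ℝ) - 1 : ℝ) ≤ 1/2 by linarith)]
        exact congrArg g (Subtype.ext
          (show 2*(2*((s:ℝ) - 1/4)) - 1 = 2*(2*(s:ℝ) - 1) by ring))
      · have hr : rhoFn (s : ℝ) = 2 * (s : ℝ) - 1 := by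
          have hi : max ((s : ℝ) - 1/4) (2 * (s : ℝ) - 1) = 2 * (s : ℝ) - 1 :=
            max_eq_right (by linarith)
          unfold rhoFn
          rw [hi]
          exact max_eq_right (by linarith)
        have hp : phiFn (s, 1) = ⟨2 * (s : ℝ) - 1, ⟨by linarith, by linarith [s.2.2]⟩⟩ :=
          Subtype.ext (by rw [phiFn_coe]; simp [hr])
        rw [hp]
        simp only [pathConcat]
        rw [dif_neg (show ¬ (2*(s:ℝ) - 1 : ℝ) ≤ 1/2 by push_neg; linarith),
          dif_neg (show ¬ ((s:ℝ) : ℝ) ≤ 1/2 by push_neg; linarith),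
          dif_neg (show ¬ (2*(s:ℝ) - 1 : ℝ) ≤ 1/2 by push_neg; linarith)]
  · intro t
    have hp : phiFn (0, t) = 0 := Subtype.ext (by rw [phiFn_coe]; norm_num [rhoFn])
    show pathConcat (pathConcat f g) h (phiFn (0, t)) = f 0
    rw [hp]
    simp only [pathConcat]
    rw [dif_pos (show ((0 : unitInterval) : ℝ) ≤ 1/2 by norm_num),
      dif_pos (show 2 * ((0 : unitInterval) : ℝ) ≤ 1/2 by norm_num)]
    exact congrArg f (Subtype.ext
      (show 2 * (2 * ((0 : unitInterval) : ℝ)) = ((0 : unitInterval) : ℝ) by norm_num))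
  · intro t
    have hp : phiFn (1, t) = 1 := Subtype.ext (by rw [phiFn_coe]; norm_num [rhoFn])
    show pathConcat (pathConcat f g) h (phiFn (1, t)) = h 1
    rw [hp]
    simp only [pathConcat]
    rw [dif_neg (show ¬ ((1 : unitInterval) : ℝ) ≤ 1/2 by norm_num)]
    exact congrArg h (Subtype.ext
      (show 2 * ((1 : unitInterval) : ℝ) - 1 = ((1 : unitInterval) : ℝ) by norm_num))
end

section
/- Let f : ℝ → ℝ be defined by f x = (2/π) · arctan x. Then for all real numbers x, x', a with |x| < |x'| and 0 < a, one has f (x' + a) − f (x' − a) < f (x + a) − f (x − a). -/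
theorem arctan_interval_shrinks (x x' a : ℝ) (h : |x| < |x'|) (ha : 0 < a) :
    (2 / Real.pi) * Real.arctan (x' + a) - (2 / Real.pi) * Real.arctan (x' - a) <
      (2 / Real.pi) * Real.arctan (x + a) - (2 / Real.pi) * Real.arctan (x - a) := by
  set g : ℝ → ℝ := fun t => Real.arctan (t + a) - Real.arctan (t - a) with hg
  have geven : ∀ t : ℝ, g (-t) = g t := by
    intro t
    simp only [hg]
    have h1 : -t + a = -(t - a) := by ring
    have h2 : -t - a = -(t + a) := by ring
    rw [h1, h2, Real.arctan_neg, Real.arctan_neg]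
    ring
  have gabs : ∀ t : ℝ, g (|t|) = g t := by
    intro t
    rcases abs_choice t with h1 | h1
    · rw [h1]
    · rw [h1, geven]
  have hderiv : ∀ t : ℝ, HasDerivAt g (1 / (1 + (t + a) ^ 2) - 1 / (1 + (t - a) ^ 2)) t := by
    intro t
    have h1 : HasDerivAt (fun t : ℝ => t + a) 1 t := (hasDerivAt_id t).add_const a
    have h2 : HasDerivAt (fun t : ℝ => t - a) 1 t := (hasDerivAt_id t).sub_const a
    have h3 := (Real.hasDerivAt_arctan (t + a)).comp t h1
    have h4 := (Real.hasDerivAt_arctan (t - a)).comp t h2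
    have h5 := h3.sub h4
    rw [mul_one, mul_one] at h5
    exact h5
  have hanti : StrictAntiOn g (Set.Ici (0 : ℝ)) := by
    apply strictAntiOn_of_deriv_neg (convex_Ici 0)
      (fun t _ => (hderiv t).continuousAt.continuousWithinAt)
    intro t ht
    rw [interior_Ici] at ht
    rw [(hderiv t).deriv]
    have h1 : (1 : ℝ) + (t - a) ^ 2 < 1 + (t + a) ^ 2 := by nlinarith [Set.mem_Ioi.mp ht]
    have h2 : (0 : ℝ) < 1 + (t - a) ^ 2 := by positivity
    have := one_div_lt_one_div_of_lt h2 h1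
    linarith
  have key : g x' < g x := by
    rw [← gabs x, ← gabs x']
    exact hanti (Set.mem_Ici.mpr (abs_nonneg x)) (Set.mem_Ici.mpr ((abs_nonneg x).trans h.le)) h
  have hpi : (0 : ℝ) < 2 / Real.pi := by positivity
  have := mul_lt_mul_of_pos_left key hpi
  simp only [hg, mul_sub] at this
  linarith
end

section
/- Let r ≥ 0 be a real number. Define c_r : Set ℝ → Set ℝ by c_r A = {x | EMetric.infEdist x A ≤ ENNReal.ofReal r}, and define the product closure membership predicate on ℝ × unitInterval by: p ∈ cΠ A if and only if for every δ > 0 there exists (y, s) ∈ A with |p.1 − y| < r + δ and |(p.2 : ℝ) − (s : ℝ)| < δ. Then the closure space (ℝ, c_r) is contractible: there exists a map H : ℝ × unitInterval → ℝ such that H (x, 0) = x for all x ∈ ℝ, H (x, 1) = 0 for all x ∈ ℝ, and H is continuous, i.e. for every A ⊆ ℝ × unitInterval and every p, if p ∈ cΠ A then H p ∈ c_r (H '' A). -/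
open Set

/-- The closure operator `c_r` on `ℝ`. -/
def crR (r : ℝ) (A : Set ℝ) : Set ℝ :=
  {x | EMetric.infEdist x A ≤ ENNReal.ofReal r}

/-- Membership in the product closure of `(ℝ, c_r)` with the topological unit interval. -/
def cPi (r : ℝ) (A : Set (ℝ × unitInterval)) : Set (ℝ × unitInterval) :=
  {p | ∀ δ > 0, ∃ q ∈ A, |p.1 - q.1| < r + δ ∧ |(p.2 : ℝ) - (q.2 : ℝ)| < δ}

theorem R_cr_contractible (r : ℝ) (hr : 0 ≤ r) :
    ∃ H : ℝ × unitInterval → ℝ,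
      (∀ x : ℝ, H (x, 0) = x) ∧
      (∀ x : ℝ, H (x, 1) = 0) ∧
      ∀ (A : Set (ℝ × unitInterval)) (p : ℝ × unitInterval),
        p ∈ cPi r A → H p ∈ crR r (H '' A) := by
  refine ⟨fun p => (1 - (p.2 : ℝ)) * p.1, fun x => by simp, fun x => by simp, ?_⟩
  intro A p hp
  apply ENNReal.le_of_forall_pos_le_add
  intro ε hε _
  set x := p.1 with hx
  set t := ((p.2 : unitInterval) : ℝ) with htd
  have ht0 : 0 ≤ t := p.2.2.1
  have ht1 : t ≤ 1 := p.2.2.2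
  have hεr : (0:ℝ) < ε := hε
  have hM : (0:ℝ) < 2 + |x| + r := by positivity
  set M : ℝ := 2 + |x| + r with hMdef
  set δ : ℝ := min 1 ((ε:ℝ)/(2*M)) with hδdef
  have hδ0 : 0 < δ := lt_min one_pos (by positivity)
  have hδ1 : δ ≤ 1 := min_le_left _ _
  have hδM : δ * M ≤ (ε:ℝ)/2 := by
    have h := min_le_right 1 ((ε:ℝ)/(2*M))
    calc δ * M ≤ ((ε:ℝ)/(2*M)) * M := by nlinarith
      _ = (ε:ℝ)/2 := by field_simp
  obtain ⟨q, hqA, h1, h2⟩ := hp δ hδ0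
  set y := q.1 with hy
  set s := ((q.2 : unitInterval) : ℝ) with hsd
  have hyb : |y| < |x| + (r + δ) := by
    have : |y| ≤ |x - y| + |x| := by
      have := abs_sub_abs_le_abs_sub y x
      have h2 := abs_sub_comm y x
      nlinarith [abs_nonneg (y - x)]
    linarith
  have key : |(1 - t) * x - (1 - s) * y| ≤ r + (ε:ℝ) := by
    have heq : (1 - t) * x - (1 - s) * y = (1 - t) * (x - y) + (t - s) * (-y) := by ring
    have habs : |(1 - t) * x - (1 - s) * y| ≤ |1 - t| * |x - y| + |t - s| * |y| := by
      rw [heq]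
      calc |(1 - t) * (x - y) + (t - s) * (-y)|
          ≤ |(1 - t) * (x - y)| + |(t - s) * (-y)| := abs_add_le _ _
        _ = |1 - t| * |x - y| + |t - s| * |y| := by rw [abs_mul, abs_mul, abs_neg]
    have h1t : |1 - t| ≤ 1 := by rw [abs_of_nonneg (by linarith)]; linarith
    have b1 : |1 - t| * |x - y| ≤ |x - y| := by
      nlinarith [abs_nonneg (x - y), abs_nonneg (1 - t)]
    have b2 : |t - s| * |y| ≤ δ * (|x| + (r + δ)) := by
      nlinarith [abs_nonneg (t - s), abs_nonneg y]
    have hδsum : δ + δ * (|x| + (r + δ)) ≤ (ε:ℝ) := by nlinarith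
    linarith
  refine le_trans (EMetric.infEdist_le_edist_of_mem (Set.mem_image_of_mem _ hqA)) ?_
  rw [edist_dist, Real.dist_eq]
  have : ENNReal.ofReal r + (ε : ENNReal) = ENNReal.ofReal (r + (ε:ℝ)) := by
    rw [ENNReal.ofReal_add hr (le_of_lt hεr), ENNReal.ofReal_coe_nnreal]
  rw [this]
  exact ENNReal.ofReal_le_ofReal key
end

section
/- Let m ≥ 1 be a natural number. Define c_m : Set ℤ → Set ℤ by c_m A = {k | ∃ j ∈ A, |k − j| ≤ m}, and define the product closure membership predicate on ℤ × unitInterval by: p ∈ cΠ A if and only if for every δ > 0 there exists (j, s) ∈ A with |p.1 − j| ≤ m and |(p.2 : ℝ) − (s : ℝ)| < δ. Then the closure space (ℤ, c_m) is contractible: there exists a map H : ℤ × unitInterval → ℤ such that H (k, 0) = k for all k ∈ ℤ, H (k, 1) = 0 for all k ∈ ℤ, and H is continuous, i.e. for every A ⊆ ℤ × unitInterval and every p, if p ∈ cΠ A then H p ∈ c_m (H '' A). -/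
open Set

/-- The closure operator `c_m` on `ℤ`. -/
def cmZ (m : ℕ) (A : Set ℤ) : Set ℤ :=
  {k | ∃ j ∈ A, |k - j| ≤ (m : ℤ)}

/-- Membership in the product closure of `(ℤ, c_m)` with the topological unit interval. -/
def cPiZ (m : ℕ) (A : Set (ℤ × unitInterval)) : Set (ℤ × unitInterval) :=
  {p | ∀ δ > 0, ∃ q ∈ A, |p.1 - q.1| ≤ (m : ℤ) ∧ |(p.2 : ℝ) - (q.2 : ℝ)| < δ}

/-- Clamp an integer into `[-M, M]`. -/
def clampZ (M k : ℤ) : ℤ := max (-M) (min M k)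

lemma clamp_key {m M M' k j : ℤ} (hm : 1 ≤ m) (hM : 0 ≤ M) (hM' : 0 ≤ M')
    (hMM : |M - M'| ≤ 1) (hkj : |k - j| ≤ m) :
    |clampZ M k - clampZ M' j| ≤ m := by
  simp only [clampZ]
  rw [abs_le] at *
  omega

lemma clamp_id {M k : ℤ} (h : |k| ≤ M) : clampZ M k = k := by
  rw [abs_le] at h; simp only [clampZ]; omega

theorem Z_cm_contractible (m : ℕ) (hm : 1 ≤ m) :
    ∃ H : ℤ × unitInterval → ℤ,
      (∀ k : ℤ, H (k, 0) = k) ∧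
      (∀ k : ℤ, H (k, 1) = 0) ∧
      ∀ (A : Set (ℤ × unitInterval)) (p : ℤ × unitInterval),
        p ∈ cPiZ m A → H p ∈ cmZ m (H '' A) := by
  refine ⟨fun p => if (p.2 : ℝ) = 0 then p.1 else clampZ ⌊(1 - (p.2:ℝ))/(p.2:ℝ)⌋ p.1, ?_, ?_, ?_⟩
  · intro k; simp
  · intro k
    have h1 : ((1 : unitInterval) : ℝ) = 1 := rfl
    simp only [h1, one_ne_zero, if_false]
    norm_num [clampZ]
  · intro A p hp
    by_cases h0 : (p.2 : ℝ) = 0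
    · -- t = 0 case
      have hδ : (0:ℝ) < 1 / (|(p.1:ℝ)| + m + 1) := by positivity
      obtain ⟨q, hqA, hq1, hq2⟩ := hp _ hδ
      refine ⟨_, ⟨q, hqA, rfl⟩, ?_⟩
      simp only [h0, if_pos rfl]
      by_cases hs : (q.2 : ℝ) = 0
      · simp [hs, hq1]
      · have hs0 : 0 < (q.2 : ℝ) := lt_of_le_of_ne q.2.2.1 (Ne.symm hs)
        have hs1 : (q.2 : ℝ) ≤ 1 := q.2.2.2
        rw [if_neg hs]
        rw [h0, zero_sub, abs_neg, abs_of_nonneg q.2.2.1] at hq2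
        have h2 : (q.2 : ℝ) * (|(p.1:ℝ)| + m + 1) < 1 :=
          (lt_div_iff₀ (by positivity)).mp hq2
        have hMbig : |(p.1:ℝ)| + m ≤ (1 - (q.2:ℝ))/(q.2:ℝ) := by
          rw [le_div_iff₀ hs0]
          nlinarith [abs_nonneg (p.1:ℝ), Nat.cast_nonneg (α := ℝ) m]
        have hfloor : |p.1| + (m:ℤ) ≤ ⌊(1 - (q.2:ℝ))/(q.2:ℝ)⌋ := by
          apply Int.le_floor.mpr
          push_cast
          exact hMbig
        have hqid : clampZ ⌊(1 - (q.2:ℝ))/(q.2:ℝ)⌋ q.1 = q.1 := by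
          apply clamp_id
          have h4 := abs_sub_abs_le_abs_sub q.1 p.1
          rw [abs_sub_comm] at hq1
          omega
        rw [hqid]; exact hq1
    · -- t > 0 case
      have ht0 : 0 < (p.2 : ℝ) := lt_of_le_of_ne p.2.2.1 (Ne.symm h0)
      have ht1 : (p.2 : ℝ) ≤ 1 := p.2.2.2
      set t : ℝ := (p.2 : ℝ) with htdef
      have hδ : (0:ℝ) < t^2 / 2 := by positivity
      obtain ⟨q, hqA, hq1, hq2⟩ := hp _ hδ
      refine ⟨_, ⟨q, hqA, rfl⟩, ?_⟩
      set s : ℝ := (q.2 : ℝ) with hsdef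
      have hs1 : s ≤ 1 := q.2.2.2
      have hslb : t / 2 < s := by
        have h3 : t - s ≤ |t - s| := le_abs_self _
        nlinarith
      have hs0 : 0 < s := lt_of_le_of_lt (by positivity) hslb
      have hsne : s ≠ 0 := ne_of_gt hs0
      simp only [← htdef, ← hsdef, if_neg h0, if_neg hsne]
      have hu : |(1 - t)/t - (1 - s)/s| < 1 := by
        have key : (1 - t)/t - (1 - s)/s = (s - t) / (t * s) := by
          field_simp; ring
        rw [key, abs_div, abs_of_pos (by positivity : (0:ℝ) < t * s), div_lt_one (by positivity)]
        have h2 : |s - t| < t^2 / 2 := by rwa [abs_sub_comm]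
        nlinarith
      rw [abs_lt] at hu
      have hA : ⌊(1 - t)/t⌋ ≤ ⌊(1 - s)/s + 1⌋ := Int.floor_le_floor (by linarith)
      have hB : ⌊(1 - s)/s⌋ ≤ ⌊(1 - t)/t + 1⌋ := Int.floor_le_floor (by linarith)
      rw [Int.floor_add_one] at hA hB
      have hMM : |⌊(1 - t)/t⌋ - ⌊(1 - s)/s⌋| ≤ 1 := by rw [abs_le]; omega
      have hMpos : 0 ≤ ⌊(1 - t)/t⌋ :=
        Int.floor_nonneg.mpr (div_nonneg (by linarith) (le_of_lt ht0))
      have hM'pos : 0 ≤ ⌊(1 - s)/s⌋ :=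
        Int.floor_nonneg.mpr (div_nonneg (by linarith) (le_of_lt hs0))
      exact clamp_key (by exact_mod_cast hm) hMpos hM'pos hMM hq1
end
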